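/- Every need-based rule D_λ with λ ∈ (1, L] fails discount monotonicity: with two projects a₁, a₂ of costs max(2,⌈λ⌉) and L respectively, and all agents ranking a₁ above a₂, the set {a₁} is the unique winner, but after reducing c(a₁) by 1, the unique winning set is {a₂}. -/

import Mathlib

open Finset

/-- The need-based disutility `t_i(λ, S)`. -/
noncomputable def tdis (c : ℕ → ℕ) (m : ℕ) (ri : ℕ → ℕ) (lam : ℝ)
    (S : Finset ℕ) : ℕ :=
  if lam ≤ ∑ a ∈ S, (c a : ℝ) then
    sInf {j : ℕ | 1 ≤ j ∧ j ≤ m ∧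
      lam ≤ ∑ a ∈ S.filter (fun b => ri b ≤ j), (c a : ℝ)}
  else m + 1

/-- The need-based rule `D_λ`. -/
def needOpt {ι : Type*} (N : Finset ι) (A : Finset ℕ) (c : ℕ → ℕ) (L m : ℕ)
    (r : ι → ℕ → ℕ) (lam : ℝ) : Set (Finset ℕ) :=
  {S | S ⊆ A ∧ ∑ a ∈ S, c a ≤ L ∧
    ∀ T ⊆ A, ∑ a ∈ T, c a ≤ L →
      ∑ i ∈ N, tdis c m (r i) lam S ≤ ∑ i ∈ N, tdis c m (r i) lam T}

/-- Projects `a₁ = 0`, `a₂ = 1` with costs `max 2 ⌈λ⌉` and `L`. -/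
noncomputable def c15 (L : ℕ) (lam : ℝ) : ℕ → ℕ := fun a =>
  if a = 0 then max 2 ⌈lam⌉.toNat else L

lemma tdis_big (c : ℕ → ℕ) (m : ℕ) (ri : ℕ → ℕ) (lam : ℝ) (S : Finset ℕ)
    (h : ∑ a ∈ S, (c a : ℝ) < lam) : tdis c m ri lam S = m + 1 := by
  unfold tdis; rw [if_neg (not_le.mpr h)]

lemma tdis_zero (c : ℕ → ℕ) (ri : ℕ → ℕ) (lam : ℝ) (h0 : ri 0 = 1)
    (h : lam ≤ (c 0 : ℝ)) : tdis c 2 ri lam {0} = 1 := by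
  have hmem : 1 ∈ {j : ℕ | 1 ≤ j ∧ j ≤ 2 ∧
      lam ≤ ∑ a ∈ ({0} : Finset ℕ).filter (fun b => ri b ≤ j), (c a : ℝ)} := by
    refine ⟨le_refl 1, by norm_num, ?_⟩
    rw [Finset.filter_singleton]
    simp [h0, h]
  unfold tdis
  rw [if_pos (by simpa using h)]
  exact le_antisymm (Nat.sInf_le hmem) (Nat.sInf_mem ⟨1, hmem⟩).1

lemma tdis_one (c : ℕ → ℕ) (ri : ℕ → ℕ) (lam : ℝ) (h1 : ri 1 = 2)
    (hpos : 0 < lam) (h : lam ≤ (c 1 : ℝ)) : tdis c 2 ri lam {1} = 2 := by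
  have hmem : 2 ∈ {j : ℕ | 1 ≤ j ∧ j ≤ 2 ∧
      lam ≤ ∑ a ∈ ({1} : Finset ℕ).filter (fun b => ri b ≤ j), (c a : ℝ)} := by
    refine ⟨by norm_num, le_refl 2, ?_⟩
    rw [Finset.filter_singleton]
    simp [h1, h]
  have hnot : 1 ∉ {j : ℕ | 1 ≤ j ∧ j ≤ 2 ∧
      lam ≤ ∑ a ∈ ({1} : Finset ℕ).filter (fun b => ri b ≤ j), (c a : ℝ)} := by
    rintro ⟨-, -, hle⟩
    rw [Finset.filter_singleton] at hle
    simp [h1] at hle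
    linarith
  unfold tdis
  rw [if_pos (by simpa using h)]
  have hm := Nat.sInf_mem ⟨2, hmem⟩
  have hle := Nat.sInf_le hmem
  have hne : sInf {j : ℕ | 1 ≤ j ∧ j ≤ 2 ∧
      lam ≤ ∑ a ∈ ({1} : Finset ℕ).filter (fun b => ri b ≤ j), (c a : ℝ)} ≠ 1 := by
    intro e; rw [e] at hm; exact hnot hm
  have h1' := hm.1
  omega

lemma subset_pair' (S : Finset ℕ) (h : S ⊆ {0, 1}) :
    S = ∅ ∨ S = {0} ∨ S = {1} ∨ S = {0, 1} := by
  have h2 := Finset.mem_powerset.mpr h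
  have hp : ({0, 1} : Finset ℕ).powerset = {∅, {0}, {1}, {0, 1}} := by decide
  rw [hp] at h2
  simpa using h2

lemma needOpt_aux {ι : Type*} (N : Finset ι) (hN : N.Nonempty) (L : ℕ)
    (c : ℕ → ℕ) (lam : ℝ) (r : ι → ℕ → ℕ)
    (hf0 : c 0 ≤ L) (hf1 : c 1 ≤ L) (hinf : L < c 0 + c 1) (w0 : ℕ)
    (h0 : ∀ i ∈ N, tdis c 2 (r i) lam {0} = w0)
    (h1 : ∀ i ∈ N, tdis c 2 (r i) lam {1} = 2)
    (he : ∀ i ∈ N, tdis c 2 (r i) lam ∅ = 3) :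
    (w0 = 1 → needOpt N {0, 1} c L 2 r lam = {({0} : Finset ℕ)}) ∧
    (w0 = 3 → needOpt N {0, 1} c L 2 r lam = {({1} : Finset ℕ)}) := by
  have hn : 0 < N.card := hN.card_pos
  have s0 : ∑ i ∈ N, tdis c 2 (r i) lam {0} = N.card * w0 := by
    rw [Finset.sum_congr rfl h0, Finset.sum_const, smul_eq_mul]
  have s1 : ∑ i ∈ N, tdis c 2 (r i) lam {1} = N.card * 2 := by
    rw [Finset.sum_congr rfl h1, Finset.sum_const, smul_eq_mul]
  have se : ∑ i ∈ N, tdis c 2 (r i) lam ∅ = N.card * 3 := by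
    rw [Finset.sum_congr rfl he, Finset.sum_const, smul_eq_mul]
  have hsum01 : ∑ a ∈ ({0, 1} : Finset ℕ), c a = c 0 + c 1 :=
    Finset.sum_pair (by norm_num)
  have hsub0 : ({0} : Finset ℕ) ⊆ {0, 1} := by
    intro x hx; simp at hx; simp [hx]
  have hsub1 : ({1} : Finset ℕ) ⊆ {0, 1} := by
    intro x hx; simp at hx; simp [hx]
  constructor
  · rintro rfl
    ext S
    simp only [needOpt, Set.mem_setOf_eq, Set.mem_singleton_iff]
    constructor
    · rintro ⟨hsub, hbud, hopt⟩
      rcases subset_pair' S hsub with rfl | rfl | rfl | rfl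
      · exfalso
        have := hopt {0} hsub0 (by simpa using hf0)
        rw [se, s0] at this; omega
      · rfl
      · exfalso
        have := hopt {0} hsub0 (by simpa using hf0)
        rw [s1, s0] at this; omega
      · exfalso; rw [hsum01] at hbud; omega
    · rintro rfl
      refine ⟨hsub0, by simpa using hf0, ?_⟩
      intro T hT hbT
      rcases subset_pair' T hT with rfl | rfl | rfl | rfl
      · rw [s0, se]; omega
      · exact le_refl _
      · rw [s0, s1]; omega
      · exfalso; rw [hsum01] at hbT; omega
  · rintro rfl
    ext S
    simp only [needOpt, Set.mem_setOf_eq, Set.mem_singleton_iff]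
    constructor
    · rintro ⟨hsub, hbud, hopt⟩
      rcases subset_pair' S hsub with rfl | rfl | rfl | rfl
      · exfalso
        have := hopt {1} hsub1 (by simpa using hf1)
        rw [se, s1] at this; omega
      · exfalso
        have := hopt {1} hsub1 (by simpa using hf1)
        rw [s0, s1] at this; omega
      · rfl
      · exfalso; rw [hsum01] at hbud; omega
    · rintro rfl
      refine ⟨hsub1, by simpa using hf1, ?_⟩
      intro T hT hbT
      rcases subset_pair' T hT with rfl | rfl | rfl | rfl
      · rw [s1, se]; omega
      · rw [s1, s0]; omega
      · exact le_refl _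
      · exfalso; rw [hsum01] at hbT; omega

/-- every need-based rule `D_λ` with `λ ∈ (1, L]` fails discount
monotonicity: with projects `a₁, a₂` of costs `max 2 ⌈λ⌉` and `L` and all
agents ranking `a₁` above `a₂`, the set `{a₁}` is the unique winning set, but
after reducing `c(a₁)` by `1` the unique winning set is `{a₂}`. -/
theorem need_fails_discount_monotonicity {ι : Type*} (N : Finset ι)
    (hN : N.Nonempty) (L : ℕ) (lam : ℝ) (hlam : 1 < lam ∧ lam ≤ (L : ℝ))
    (r : ι → ℕ → ℕ) (hr : ∀ i ∈ N, r i 0 = 1 ∧ r i 1 = 2) :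
    needOpt N {0, 1} (c15 L lam) L 2 r lam = {({0} : Finset ℕ)} ∧
    needOpt N {0, 1}
        (Function.update (c15 L lam) 0 (c15 L lam 0 - 1)) L 2 r lam
      = {({1} : Finset ℕ)} := by
  obtain ⟨hl1, hlL⟩ := hlam
  have hpos : (0 : ℝ) < lam := by linarith
  have hceil2 : (2 : ℤ) ≤ ⌈lam⌉ := by
    have : (1 : ℤ) < ⌈lam⌉ := Int.lt_ceil.mpr (by exact_mod_cast hl1)
    omega
  have hceilL : ⌈lam⌉ ≤ (L : ℤ) := Int.ceil_le.mpr (by exact_mod_cast hlL)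
  set t : ℕ := ⌈lam⌉.toNat with ht_def
  have ht : (t : ℤ) = ⌈lam⌉ := Int.toNat_of_nonneg (by omega)
  have ht2 : 2 ≤ t := by omega
  have htL : t ≤ L := by omega
  have hL2 : 2 ≤ L := le_trans ht2 htL
  have hc0 : c15 L lam 0 = t := by
    simp [c15, max_eq_right ht2]; exact max_eq_right ht2
  have hc1 : c15 L lam 1 = L := by simp [c15]
  have htR : ((t : ℕ) : ℝ) = ((⌈lam⌉ : ℤ) : ℝ) := by exact_mod_cast ht
  have hc0R : lam ≤ (c15 L lam 0 : ℝ) := by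
    rw [hc0, htR]
    exact Int.le_ceil lam
  have hc1R : lam ≤ (c15 L lam 1 : ℝ) := by rw [hc1]; exact hlL
  -- the updated cost function
  set c' : ℕ → ℕ := Function.update (c15 L lam) 0 (c15 L lam 0 - 1) with hc'
  have hc'0 : c' 0 = t - 1 := by
    rw [hc', Function.update_self, hc0]
  have hc'1 : c' 1 = L := by
    rw [hc', Function.update_of_ne (by norm_num), hc1]
  have hc'0R : ((c' 0 : ℕ) : ℝ) < lam := by
    rw [hc'0]
    have hcast : (((t - 1 : ℕ) : ℕ) : ℝ) = (t : ℝ) - 1 := by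
      have : ((t - 1 : ℕ) : ℝ) = (t : ℝ) - 1 := by
        push_cast [Nat.cast_sub (by omega : 1 ≤ t)]; ring
      exact this
    rw [hcast, htR]
    have := Int.ceil_lt_add_one lam
    push_cast at this ⊢
    linarith
  constructor
  · refine (needOpt_aux N hN L (c15 L lam) lam r
      (by omega) (by omega) (by omega) 1 ?_ ?_ ?_).1 rfl
    · intro i hi; exact tdis_zero _ _ _ (hr i hi).1 hc0R
    · intro i hi; exact tdis_one _ _ _ (hr i hi).2 hpos hc1R
    · intro i hi; exact tdis_big _ _ _ _ _ (by simpa using hpos)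
  · refine (needOpt_aux N hN L c' lam r
      (by omega) (by omega) (by omega) 3 ?_ ?_ ?_).2 rfl
    · intro i hi
      exact tdis_big _ _ _ _ _ (by simpa using hc'0R)
    · intro i hi
      exact tdis_one _ _ _ (hr i hi).2 hpos (by rw [hc'1]; exact hlL)
    · intro i hi; exact tdis_big _ _ _ _ _ (by simpa using hpos)
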